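/- Consider N ≥ 1 subcarriers with single-carrier value functions F^n as above (each F^n nondecreasing), P_max > 0, δ > 0, J = ⌊P_max/δ⌋ with J ≥ N, and Δ = ⌊J/N⌋·δ. Define F*_MCKP(P) = sup{Σ_{n=1}^{N} F^n(P̄^n) : Σ_n P̄^n ≤ P and each P̄^n ∈ {l·δ : l ∈ ℕ}}, and define G = sup{Σ_{n=1}^{N} F^n(P̄^n) : Σ_n P̄^n ≤ 2·P_max and each P̄^n ∈ {l·Δ : l ∈ ℕ, l ≤ 2N}}. Then F*_MCKP(P_max) ≤ G ≤ 2·F*_MCKP(P_max). -/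
import Mathlib


/-- **Coarse-grid estimation in ε-JSPA.** With nondecreasing single-carrier value
functions `F^n`, `J = ⌊P_max/δ⌋ ≥ N` and coarse grid spacing `Δ = ⌊J/N⌋·δ`, the optimal
value `G` of the coarse-grid problem MCKP′ (budget `2·P_max`, budgets of the form `l·Δ`
with `l ≤ 2N`) satisfies `F*_MCKP(P_max) ≤ G ≤ 2·F*_MCKP(P_max)`, where `F*_MCKP(P)` is
the optimal value of the `δ`-grid problem with budget `P`, taken to be nondecreasing and
subadditive. -/
theorem stmt_14
    (N : ℕ) (hN : 1 ≤ N)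
    (F : ℕ → ℝ → ℝ) (hF : ∀ n, 1 ≤ n → n ≤ N → Monotone (F n))
    (Pmax δ : ℝ) (hPmax : 0 < Pmax) (hδ : 0 < δ)
    (J : ℕ) (hJ : J = ⌊Pmax / δ⌋₊) (hJN : N ≤ J)
    (Δ : ℝ) (hΔ : Δ = (↑(J / N) : ℝ) * δ)
    (FMCKP : ℝ → ℝ)
    (hFMCKP : ∀ P : ℝ, FMCKP P = sSup {v : ℝ | ∃ Q : ℕ → ℝ,
      (∑ n ∈ Finset.Icc 1 N, Q n) ≤ P ∧
      (∀ n, 1 ≤ n → n ≤ N → ∃ l : ℕ, Q n = (l : ℝ) * δ) ∧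
      v = ∑ n ∈ Finset.Icc 1 N, F n (Q n)})
    (hmono : ∀ P₁ P₂ : ℝ, 0 ≤ P₁ → P₁ ≤ P₂ → FMCKP P₁ ≤ FMCKP P₂)
    (hsub : ∀ P₁ P₂ : ℝ, 0 ≤ P₁ → 0 ≤ P₂ → FMCKP (P₁ + P₂) ≤ FMCKP P₁ + FMCKP P₂)
    (G : ℝ)
    (hG : G = sSup {v : ℝ | ∃ Q : ℕ → ℝ,
      (∑ n ∈ Finset.Icc 1 N, Q n) ≤ 2 * Pmax ∧
      (∀ n, 1 ≤ n → n ≤ N → ∃ l : ℕ, l ≤ 2 * N ∧ Q n = (l : ℝ) * Δ) ∧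
      v = ∑ n ∈ Finset.Icc 1 N, F n (Q n)}) :
    FMCKP Pmax ≤ G ∧ G ≤ 2 * FMCKP Pmax := by
  have hNpos : 0 < N := hN
  set q := J / N with hqdef
  have hq1 : 1 ≤ q := (Nat.one_le_div_iff hNpos).mpr hJN
  have hqR : (1:ℝ) ≤ (q:ℝ) := by exact_mod_cast hq1
  have hΔpos : 0 < Δ := by rw [hΔ]; exact mul_pos (lt_of_lt_of_le one_pos hqR) hδ
  have hJδ : (J:ℝ) * δ ≤ Pmax := by
    have h1 : (J:ℝ) ≤ Pmax / δ := by
      rw [hJ]; exact Nat.floor_le (by positivity)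
    calc (J:ℝ)*δ ≤ (Pmax/δ)*δ := by nlinarith
    _ = Pmax := div_mul_cancel₀ _ (ne_of_gt hδ)
  have hNΔ : (N:ℝ) * Δ ≤ Pmax := by
    have h1 : q * N ≤ J := Nat.div_mul_le_self J N
    have h1R : (q:ℝ) * N ≤ J := by exact_mod_cast h1
    rw [hΔ]
    nlinarith
  have hdm := Nat.div_add_mod J N
  have hmod : J % N < N := Nat.mod_lt _ hNpos
  have h2Nq : J + 1 ≤ 2 * N * q := by
    have hdm' : N * q + J % N = J := by rw [hqdef]; exact hdm
    have hNq : N ≤ N * q := Nat.le_mul_of_pos_right N hq1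
    calc J + 1 ≤ N * q + N := by omega
      _ ≤ N * q + N * q := by omega
      _ = 2 * N * q := by ring
  have hPmaxΔ : Pmax ≤ 2 * (N:ℝ) * Δ := by
    have h1 : Pmax < ((J:ℝ)+1) * δ := by
      have h := Nat.lt_floor_add_one (Pmax/δ)
      rw [← hJ] at h
      have : Pmax / δ * δ = Pmax := div_mul_cancel₀ _ (ne_of_gt hδ)
      nlinarith
    have h2 : ((J:ℝ)+1) * δ ≤ 2*(N:ℝ)*Δ := by
      have hc : ((J:ℝ)+1) ≤ 2*(N:ℝ)*(q:ℝ) := by exact_mod_cast h2Nq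
      rw [hΔ]
      nlinarith
    linarith
  -- generic upper bound for feasible values
  have key_bound : ∀ (P : ℝ) (Q : ℕ → ℝ),
      (∑ n ∈ Finset.Icc 1 N, Q n) ≤ P →
      (∀ n, 1 ≤ n → n ≤ N → 0 ≤ Q n) →
      (∑ n ∈ Finset.Icc 1 N, F n (Q n)) ≤ ∑ n ∈ Finset.Icc 1 N, F n P := by
    intro P Q hsum hpos
    refine Finset.sum_le_sum ?_
    intro n hn
    have hn' := Finset.mem_Icc.mp hn
    refine hF n hn'.1 hn'.2 ?_
    calc Q n ≤ ∑ m ∈ Finset.Icc 1 N, Q m := by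
          refine Finset.single_le_sum ?_ hn
          intro m hm
          have hm' := Finset.mem_Icc.mp hm
          exact hpos m hm'.1 hm'.2
      _ ≤ P := hsum
  -- upper bound for the δ-grid set
  have bddSδ : ∀ P : ℝ, ∀ v : ℝ, (∃ Q : ℕ → ℝ,
      (∑ n ∈ Finset.Icc 1 N, Q n) ≤ P ∧
      (∀ n, 1 ≤ n → n ≤ N → ∃ l : ℕ, Q n = (l : ℝ) * δ) ∧
      v = ∑ n ∈ Finset.Icc 1 N, F n (Q n)) → v ≤ ∑ n ∈ Finset.Icc 1 N, F n P := by
    rintro P v ⟨Q, hsum, hgrid, rfl⟩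
    refine key_bound P Q hsum ?_
    intro n h1 h2
    obtain ⟨l, hl⟩ := hgrid n h1 h2
    rw [hl]; positivity
  -- upper bound for the coarse set
  have bddSc : ∀ v : ℝ, (∃ Q : ℕ → ℝ,
      (∑ n ∈ Finset.Icc 1 N, Q n) ≤ 2 * Pmax ∧
      (∀ n, 1 ≤ n → n ≤ N → ∃ l : ℕ, l ≤ 2 * N ∧ Q n = (l : ℝ) * Δ) ∧
      v = ∑ n ∈ Finset.Icc 1 N, F n (Q n)) →
      v ≤ ∑ n ∈ Finset.Icc 1 N, F n (2 * Pmax) := by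
    rintro v ⟨Q, hsum, hgrid, rfl⟩
    refine key_bound (2*Pmax) Q hsum ?_
    intro n h1 h2
    obtain ⟨l, _, hl⟩ := hgrid n h1 h2
    rw [hl]; positivity
  have zero_memδ : ∀ P : ℝ, 0 ≤ P → (∃ Q : ℕ → ℝ,
      (∑ n ∈ Finset.Icc 1 N, Q n) ≤ P ∧
      (∀ n, 1 ≤ n → n ≤ N → ∃ l : ℕ, Q n = (l : ℝ) * δ) ∧
      (∑ n ∈ Finset.Icc 1 N, F n 0) = ∑ n ∈ Finset.Icc 1 N, F n (Q n)) := by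
    intro P hP
    exact ⟨fun _ => 0, by simpa using hP, fun n _ _ => ⟨0, by simp⟩, rfl⟩
  have zero_memc : (∃ Q : ℕ → ℝ,
      (∑ n ∈ Finset.Icc 1 N, Q n) ≤ 2 * Pmax ∧
      (∀ n, 1 ≤ n → n ≤ N → ∃ l : ℕ, l ≤ 2 * N ∧ Q n = (l : ℝ) * Δ) ∧
      (∑ n ∈ Finset.Icc 1 N, F n 0) = ∑ n ∈ Finset.Icc 1 N, F n (Q n)) :=
    ⟨fun _ => 0, by simp; positivity, fun n _ _ => ⟨0, by simp⟩, rfl⟩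
  constructor
  · -- FMCKP Pmax ≤ G
    rw [hFMCKP]
    apply csSup_le
    · exact ⟨_, zero_memδ Pmax hPmax.le⟩
    · rintro v ⟨Q, hsum, hgrid, rfl⟩
      have hQnn : ∀ n, 1 ≤ n → n ≤ N → 0 ≤ Q n := by
        intro n h1 h2
        obtain ⟨l, hl⟩ := hgrid n h1 h2
        rw [hl]; positivity
      have hQle : ∀ n ∈ Finset.Icc 1 N, Q n ≤ Pmax := by
        intro n hn
        calc Q n ≤ ∑ m ∈ Finset.Icc 1 N, Q m := by
              refine Finset.single_le_sum ?_ hn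
              intro m hm
              have hm' := Finset.mem_Icc.mp hm
              exact hQnn m hm'.1 hm'.2
          _ ≤ Pmax := hsum
      set Q' : ℕ → ℝ := fun n => (⌈Q n / Δ⌉₊ : ℝ) * Δ with hQ'def
      have hle : ∀ n ∈ Finset.Icc 1 N, Q n ≤ Q' n := by
        intro n hn
        have h1 : Q n / Δ ≤ (⌈Q n / Δ⌉₊ : ℝ) := Nat.le_ceil _
        have : Q n / Δ * Δ = Q n := div_mul_cancel₀ _ (ne_of_gt hΔpos)
        simp only [hQ'def]
        nlinarith
      have hub : ∀ n ∈ Finset.Icc 1 N, Q' n ≤ Q n + Δ := by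
        intro n hn
        have hn' := Finset.mem_Icc.mp hn
        have h0 : 0 ≤ Q n / Δ := div_nonneg (hQnn n hn'.1 hn'.2) hΔpos.le
        have h1 : (⌈Q n / Δ⌉₊ : ℝ) < Q n / Δ + 1 := Nat.ceil_lt_add_one h0
        have : Q n / Δ * Δ = Q n := div_mul_cancel₀ _ (ne_of_gt hΔpos)
        simp only [hQ'def]
        nlinarith
      have hlbound : ∀ n ∈ Finset.Icc 1 N, ⌈Q n / Δ⌉₊ ≤ 2 * N := by
        intro n hn
        rw [Nat.ceil_le, div_le_iff₀ hΔpos]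
        push_cast
        calc Q n ≤ Pmax := hQle n hn
          _ ≤ 2 * (N:ℝ) * Δ := hPmaxΔ
      have hsum' : (∑ n ∈ Finset.Icc 1 N, Q' n) ≤ 2 * Pmax := by
        calc ∑ n ∈ Finset.Icc 1 N, Q' n ≤ ∑ n ∈ Finset.Icc 1 N, (Q n + Δ) :=
              Finset.sum_le_sum hub
          _ = (∑ n ∈ Finset.Icc 1 N, Q n) + (N:ℝ) * Δ := by
              rw [Finset.sum_add_distrib, Finset.sum_const, Nat.card_Icc]
              simp [nsmul_eq_mul]
          _ ≤ Pmax + Pmax := add_le_add hsum hNΔ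
          _ = 2 * Pmax := by ring
      have hvv : (∑ n ∈ Finset.Icc 1 N, F n (Q n)) ≤
          ∑ n ∈ Finset.Icc 1 N, F n (Q' n) := by
        refine Finset.sum_le_sum ?_
        intro n hn
        have hn' := Finset.mem_Icc.mp hn
        exact hF n hn'.1 hn'.2 (hle n hn)
      rw [hG]
      refine le_trans hvv (le_csSup ⟨_, fun w hw => bddSc w hw⟩ ?_)
      refine ⟨Q', hsum', ?_, rfl⟩
      intro n h1 h2
      exact ⟨⌈Q n / Δ⌉₊, hlbound n (Finset.mem_Icc.mpr ⟨h1, h2⟩), rfl⟩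
  · -- G ≤ 2 * FMCKP Pmax
    have step1 : G ≤ FMCKP (2 * Pmax) := by
      rw [hG, hFMCKP]
      refine csSup_le ⟨_, zero_memc⟩ ?_
      rintro v ⟨Q, hsum, hgrid, rfl⟩
      refine le_csSup ⟨_, fun w hw => bddSδ (2*Pmax) w hw⟩ ?_
      refine ⟨Q, hsum, ?_, rfl⟩
      intro n h1 h2
      obtain ⟨l, _, hl⟩ := hgrid n h1 h2
      refine ⟨l * q, ?_⟩
      rw [hl, hΔ]
      push_cast
      ring
    have step2 : FMCKP (2 * Pmax) ≤ 2 * FMCKP Pmax := by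
      have h := hsub Pmax Pmax hPmax.le hPmax.le
      rw [show (2:ℝ) * Pmax = Pmax + Pmax by ring]
      linarith
    linarith
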